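/- arXiv:2205.15498 — 2 statements merged into one kernel-verified Lean document; each statement's English description precedes it below -/
import Mathlib

section
/- Let p be a prime with p ≡ 5 (mod 8). Then the (p+1)×(p+1) integer matrices X and Y satisfy X² + Y² = −p · I_{p+1}. -/
open Matrix

/-- Entry `χ(c)` where `b - a = c²` is a nonzero square (value `1` if `c` can be chosen a
square, i.e. `b - a` is a nonzero fourth power, `-1` if `b - a` is a nonzero square that is
not a fourth power, and `0` otherwise). -/
def RX (p : ℕ) [NeZero p] : Matrix (ZMod p) (ZMod p) ℤ :=
  Matrix.of fun a b =>
    if ∃ c : ZMod p, c ≠ 0 ∧ c ^ 2 = b - a ∧ ∃ d : ZMod p, d ^ 2 = c then 1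
    else if ∃ c : ZMod p, c ≠ 0 ∧ c ^ 2 = b - a then -1
    else 0

def RY (p : ℕ) [NeZero p] : Matrix (ZMod p) (ZMod p) ℤ :=
  Matrix.of fun a b =>
    if ∃ c : ZMod p, c ≠ 0 ∧ c ^ 2 = 2 * (b - a) ∧ ∃ d : ZMod p, d ^ 2 = c then 1
    else if ∃ c : ZMod p, c ≠ 0 ∧ c ^ 2 = 2 * (b - a) then -1
    else 0

def Xmat (p : ℕ) [NeZero p] : Matrix (Option (ZMod p)) (Option (ZMod p)) ℤ :=
  Matrix.of fun i j =>
    match i, j with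
    | none, none => 0
    | none, some _ => 1
    | some _, none => -1
    | some a, some b => RX p a b

def Ymat (p : ℕ) [NeZero p] : Matrix (Option (ZMod p)) (Option (ZMod p)) ℤ :=
  Matrix.of fun i j =>
    match i, j with
    | none, _ => 0
    | some _, none => 0
    | some a, some b => RY p a b

/-- Index set of the length `2(p+1)` code. -/
abbrev NVIdx (p : ℕ) := Option (ZMod p) ⊕ Option (ZMod p)

def Bw (p : ℕ) [NeZero p] : Matrix (NVIdx p) (NVIdx p) ℤ :=
  Matrix.fromBlocks (Xmat p) (Ymat p) (-(Ymat p)ᵀ) (Xmat p)ᵀ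

/-- Generator matrix `a I + B_w` (over `ℤ`). -/
def NVgen (p : ℕ) [NeZero p] (a : ℤ) : Matrix (NVIdx p) (NVIdx p) ℤ :=
  a • (1 : Matrix (NVIdx p) (NVIdx p) ℤ) + Bw p

/-- The ternary code `NV^(a)(p)`: the row space over `𝔽₃` of `a I + B_w` reduced mod 3. -/
def NVcode (p : ℕ) [NeZero p] (a : ℤ) : Submodule (ZMod 3) (NVIdx p → ZMod 3) :=
  Submodule.span (ZMod 3) (Set.range fun i => ((NVgen p a).map (Int.cast : ℤ → ZMod 3)) i)

/-- The matrix `H_{NV^(a)(p)}`. -/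
def Hnv (p : ℕ) [NeZero p] (a : ℤ) : Matrix (NVIdx p) (NVIdx p) ℤ :=
  Matrix.fromBlocks
    (Xmat p - (Ymat p)ᵀ + a • 1) (Ymat p + (Xmat p)ᵀ + a • 1)
    (-(Ymat p)ᵀ - Xmat p - a • 1) ((Xmat p)ᵀ - Ymat p + a • 1)

/-- Weight of a ternary vector: the number of nonzero coordinates. -/
def wt {ι : Type*} [Fintype ι] (v : ι → ZMod 3) : ℕ :=
  (Finset.univ.filter fun i => v i ≠ 0).card

/-- `H` is a Hadamard matrix of order `n`. -/
def IsHadamard {ι : Type*} [Fintype ι] [DecidableEq ι] (n : ℕ) (H : Matrix ι ι ℤ) : Prop :=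
  (∀ i j, H i j = 1 ∨ H i j = -1) ∧ H * Hᵀ = (n : ℤ) • (1 : Matrix ι ι ℤ)

section
variable (p : ℕ) [Fact p.Prime] (hp : p % 8 = 5)

def eta (t : ZMod p) : ℤ := RX p 0 t

variable {p}

lemma RX_eq (a b : ZMod p) : RX p a b = eta p (b - a) := by
  simp [RX, eta, Matrix.of_apply, sub_zero]

include hp

lemma hp2ne : (2 : ZMod p) ≠ 0 := by
  intro h
  have h2 : ((2:ℕ) : ZMod p) = 0 := by exact_mod_cast h
  rw [ZMod.natCast_eq_zero_iff] at h2
  have := Nat.le_of_dvd (by norm_num) h2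
  omega

lemma isSquare_neg_one' : IsSquare (-1 : ZMod p) :=
  ZMod.exists_sq_eq_neg_one_iff.mpr (by omega)

lemma sq_roots {c₀ c : ZMod p} (h : c ^ 2 = c₀ ^ 2) : c = c₀ ∨ c = -c₀ := by
  have : (c - c₀) * (c + c₀) = 0 := by linear_combination h
  rcases mul_eq_zero.mp this with h | h
  · left; exact sub_eq_zero.mp h
  · right; exact eq_neg_of_add_eq_zero_left h

lemma eta_eq {t c₀ : ZMod p} (hc₀ : c₀ ≠ 0) (hc₀t : c₀ ^ 2 = t) :
    eta p t = quadraticChar (ZMod p) c₀ := by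
  have hm1 := isSquare_neg_one' hp
  have hiff : (∃ c : ZMod p, c ≠ 0 ∧ c ^ 2 = t ∧ ∃ d : ZMod p, d ^ 2 = c) ↔ IsSquare c₀ := by
    constructor
    · rintro ⟨c, hc, hct, d, hdc⟩
      have hcc : IsSquare c := ⟨d, by rw [← hdc]; ring⟩
      rcases sq_roots hp (hct.trans hc₀t.symm) with rfl | rfl
      · exact hcc
      · have := hm1.mul hcc
        rwa [show (-1 : ZMod p) * -c₀ = c₀ by ring] at this
    · rintro ⟨r, hr⟩
      exact ⟨c₀, hc₀, hc₀t, r, by rw [hr]; ring⟩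
  unfold eta RX
  simp only [Matrix.of_apply, sub_zero]
  by_cases hsq : IsSquare c₀
  · rw [if_pos (hiff.mpr hsq), (quadraticChar_one_iff_isSquare hc₀).mpr hsq]
  · rw [if_neg (fun h => hsq (hiff.mp h)), if_pos ⟨c₀, hc₀, hc₀t⟩,
      quadraticChar_neg_one_iff_not_isSquare.mpr hsq]

lemma eta_zero_of (t : ZMod p) (h : ¬ ∃ c : ZMod p, c ≠ 0 ∧ c ^ 2 = t) : eta p t = 0 := by
  unfold eta RX
  simp only [Matrix.of_apply, sub_zero]
  rw [if_neg, if_neg h]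
  rintro ⟨c, hc, hct, _⟩; exact h ⟨c, hc, hct⟩

lemma eta_zero : eta p (0 : ZMod p) = 0 := by
  apply eta_zero_of hp
  rintro ⟨c, hc, hct⟩
  exact hc (sq_eq_zero_iff.mp hct)

lemma two_eta (t : ZMod p) :
    2 * eta p t = ∑ c : ZMod p, if c ^ 2 = t then quadraticChar (ZMod p) c else 0 := by
  by_cases h : ∃ c : ZMod p, c ≠ 0 ∧ c ^ 2 = t
  · obtain ⟨c₀, hc₀, hc₀t⟩ := h
    have hcc : c₀ ≠ -c₀ := by
      intro h
      have h2 : (2 : ZMod p) * c₀ = 0 := by linear_combination h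
      rcases mul_eq_zero.mp h2 with h' | h'
      · exact hp2ne hp h'
      · exact hc₀ h'
    have hsplit : ∀ c : ZMod p,
        (if c ^ 2 = t then quadraticChar (ZMod p) c else 0)
          = (if c = c₀ then quadraticChar (ZMod p) c else 0)
            + (if c = -c₀ then quadraticChar (ZMod p) c else 0) := by
      intro c
      by_cases hc : c ^ 2 = t
      · rcases sq_roots hp (hc.trans hc₀t.symm) with rfl | rfl
        · rw [if_pos hc, if_pos rfl, if_neg hcc, add_zero]
        · rw [if_pos hc, if_pos rfl, if_neg (show ¬ (-c₀ = c₀) from fun h => hcc h.symm),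
            zero_add]
      · rw [if_neg hc, if_neg (show ¬ c = c₀ from fun h => hc (h ▸ hc₀t)),
          if_neg (show ¬ c = -c₀ from fun h => hc (by rw [h, ← hc₀t]; ring)), add_zero]
    rw [Finset.sum_congr rfl fun c _ => hsplit c, Finset.sum_add_distrib,
      Finset.sum_ite_eq' Finset.univ c₀, Finset.sum_ite_eq' Finset.univ (-c₀),
      if_pos (Finset.mem_univ _), if_pos (Finset.mem_univ _),
      eta_eq hp hc₀ hc₀t]
    have : quadraticChar (ZMod p) (-c₀) = quadraticChar (ZMod p) (-1) * quadraticChar (ZMod p) c₀ := by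
      rw [← _root_.map_mul]; ring_nf
    rw [this, (quadraticChar_one_iff_isSquare (neg_ne_zero.mpr one_ne_zero)).mpr (isSquare_neg_one' hp)]
    ring
  · rw [eta_zero_of hp t h, Finset.sum_eq_zero, mul_zero]
    intro c _
    by_cases hc : c ^ 2 = t
    · rcases eq_or_ne c 0 with rfl | hc0
      · simp
      · exact absurd ⟨c, hc0, hc⟩ h
    · simp [hc]

lemma sum_eta : ∑ t : ZMod p, eta p t = 0 := by
  have h2 : (2 : ℤ) * ∑ t : ZMod p, eta p t = 0 := by
    rw [Finset.mul_sum, Finset.sum_congr rfl fun t _ => two_eta hp t, Finset.sum_comm]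
    rw [Finset.sum_congr rfl fun y _ =>
      Finset.sum_ite_eq Finset.univ (y ^ 2) (fun _ => quadraticChar (ZMod p) y)]
    simp only [Finset.mem_univ, if_true]
    exact quadraticChar_sum_zero (by rw [ZMod.ringChar_zmod_n]; omega)
  have := mul_eq_zero.mp h2
  simpa using this
end

-- appended to s2 content
section TS
variable {p : ℕ} [Fact p.Prime] (hp : p % 8 = 5)

private def χ (p : ℕ) [Fact p.Prime] := quadraticChar (ZMod p)

def Tsum (p : ℕ) [Fact p.Prime] (d : ZMod p) : ℤ :=
  ∑ ce : ZMod p × ZMod p, if ce.1 ^ 2 + ce.2 ^ 2 = d then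
    quadraticChar (ZMod p) ce.1 * quadraticChar (ZMod p) ce.2 else 0

def Ssum (p : ℕ) [Fact p.Prime] (d : ZMod p) : ℤ := ∑ x : ZMod p, eta p x * eta p (d - x)

include hp

lemma four_S (d : ZMod p) : 4 * Ssum p d = Tsum p d := by
  have : 4 * Ssum p d = ∑ x : ZMod p, (2 * eta p x) * (2 * eta p (d - x)) := by
    unfold Ssum; rw [Finset.mul_sum]; congr 1; ext x; ring
  rw [this]
  rw [Finset.sum_congr rfl fun x _ => by rw [two_eta hp x, two_eta hp (d - x)]]
  rw [Finset.sum_congr rfl fun x _ => Finset.sum_mul_sum _ _ _ _]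
  rw [Finset.sum_comm]
  unfold Tsum
  rw [Fintype.sum_prod_type]
  refine Finset.sum_congr rfl fun c _ => ?_
  rw [Finset.sum_comm]
  refine Finset.sum_congr rfl fun e _ => ?_
  have : ∀ x : ZMod p,
      (if c ^ 2 = x then quadraticChar (ZMod p) c else 0) *
        (if e ^ 2 = d - x then quadraticChar (ZMod p) e else 0)
      = if c ^ 2 = x then (if e ^ 2 = d - x then quadraticChar (ZMod p) c * quadraticChar (ZMod p) e else 0) else 0 := by
    intro x
    by_cases h1 : c ^ 2 = x <;> by_cases h2 : e ^ 2 = d - x <;> simp [h1, h2]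
  rw [Finset.sum_congr rfl fun x _ => this x,
    Finset.sum_ite_eq Finset.univ (c ^ 2) _, if_pos (Finset.mem_univ _)]
  refine if_congr ?_ rfl rfl
  constructor <;> intro h <;> linear_combination h

end TS

section TS2
variable {p : ℕ} [Fact p.Prime] (hp : p % 8 = 5)
include hp

lemma sum_pair_ite {c₀ : ZMod p} (hc₀ : c₀ ≠ 0) (f : ZMod p → ℤ) (P : ZMod p → Prop)
    [DecidablePred P] (hP : ∀ e, P e ↔ e ^ 2 = c₀ ^ 2) :
    ∑ e : ZMod p, (if P e then f e else 0) = f c₀ + f (-c₀) := by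
  have hcc : c₀ ≠ -c₀ := by
    intro h
    have h2 : (2 : ZMod p) * c₀ = 0 := by linear_combination h
    rcases mul_eq_zero.mp h2 with h' | h'
    · exact hp2ne hp h'
    · exact hc₀ h'
  have hsplit : ∀ e : ZMod p,
      (if P e then f e else 0) = (if e = c₀ then f e else 0) + (if e = -c₀ then f e else 0) := by
    intro e
    by_cases he : P e
    · rcases sq_roots hp ((hP e).mp he) with rfl | rfl
      · rw [if_pos he, if_pos rfl, if_neg hcc, add_zero]
      · rw [if_pos he, if_pos rfl, if_neg (show ¬ (-c₀ = c₀) from fun h => hcc h.symm), zero_add]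
    · rw [if_neg he, if_neg (show ¬ e = c₀ from fun h => he ((hP e).mpr (by rw [h]))),
        if_neg (show ¬ e = -c₀ from fun h => he ((hP e).mpr (by rw [h]; ring))), add_zero]
  rw [Finset.sum_congr rfl fun e _ => hsplit e, Finset.sum_add_distrib,
    Finset.sum_ite_eq' Finset.univ c₀, Finset.sum_ite_eq' Finset.univ (-c₀),
    if_pos (Finset.mem_univ _), if_pos (Finset.mem_univ _)]

lemma T_scale {u : ZMod p} (hu : u ≠ 0) (m : ZMod p) : Tsum p (u ^ 2 * m) = Tsum p m := by
  unfold Tsum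
  refine (Fintype.sum_bijective (fun ce : ZMod p × ZMod p => (u * ce.1, u * ce.2)) ?_ _ _ ?_).symm
  · constructor
    · rintro ⟨a, b⟩ ⟨c, d⟩ h
      simp only [Prod.mk.injEq] at h
      exact Prod.ext (mul_left_cancel₀ hu h.1) (mul_left_cancel₀ hu h.2)
    · rintro ⟨a, b⟩
      exact ⟨(u⁻¹ * a, u⁻¹ * b), by simp [mul_inv_cancel_left₀ hu]⟩
  · rintro ⟨c, e⟩
    simp only
    have hcond : (c ^ 2 + e ^ 2 = m) ↔ ((u * c) ^ 2 + (u * e) ^ 2 = u ^ 2 * m) := by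
      constructor
      · intro h; linear_combination u ^ 2 * h
      · intro h
        have : u ^ 2 * (c ^ 2 + e ^ 2) = u ^ 2 * m := by linear_combination h
        exact mul_left_cancel₀ (pow_ne_zero 2 hu) this
    rw [if_congr hcond rfl rfl]
    by_cases h : (u * c) ^ 2 + (u * e) ^ 2 = u ^ 2 * m
    · rw [if_pos h, if_pos h, _root_.map_mul, _root_.map_mul]
      have : quadraticChar (ZMod p) u * quadraticChar (ZMod p) u = 1 := by
        rw [← sq]; exact quadraticChar_sq_one hu
      linear_combination (-(quadraticChar (ZMod p) c * quadraticChar (ZMod p) e)) * this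
    · rw [if_neg h, if_neg h]

lemma T_zero : Tsum p 0 = -2 * ((p : ℤ) - 1) := by
  obtain ⟨j, hj⟩ := isSquare_neg_one' hp
  have hi2 : j ^ 2 = -1 := by rw [sq, ← hj]
  have hne1 : (-1 : ZMod p) ≠ 1 := by
    intro h
    exact hp2ne hp (by linear_combination -h)
  have hj0 : j ≠ 0 := by
    rintro rfl
    exact hne1 (by linear_combination -2 * hi2)
  have hjns : ¬ IsSquare j := by
    rintro ⟨k, rfl⟩
    have hk0 : k ≠ 0 := by
      rintro rfl
      exact hne1 (by linear_combination -2 * hi2)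
    have h4 : k ^ 4 = -1 := by rw [← hi2]; ring
    have h8 : k ^ 8 = 1 := by rw [show (8:ℕ) = 4*2 by rfl, pow_mul, h4]; ring
    have hord8 : orderOf k ∣ 8 := orderOf_dvd_of_pow_eq_one h8
    have hnord4 : ¬ orderOf k ∣ 4 := by
      intro h
      have : k ^ 4 = 1 := orderOf_dvd_iff_pow_eq_one.mp h
      rw [h4] at this; exact hne1 this
    have hle : orderOf k ≤ 8 := Nat.le_of_dvd (by norm_num) hord8
    have hord : orderOf k = 8 := by interval_cases h : orderOf k <;> omega
    have hdvd : orderOf k ∣ p - 1 :=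
      orderOf_dvd_of_pow_eq_one (ZMod.pow_card_sub_one_eq_one hk0)
    rw [hord] at hdvd
    omega
  have hχj : quadraticChar (ZMod p) j = -1 := quadraticChar_neg_one_iff_not_isSquare.mpr hjns
  have hχm1 : quadraticChar (ZMod p) (-1 : ZMod p) = 1 :=
    (quadraticChar_one_iff_isSquare (neg_ne_zero.mpr one_ne_zero)).mpr (isSquare_neg_one' hp)
  have hinner : ∀ c : ZMod p,
      (∑ e : ZMod p, if c ^ 2 + e ^ 2 = 0 then
        quadraticChar (ZMod p) c * quadraticChar (ZMod p) e else 0)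
        = if c = 0 then 0 else -2 := by
    intro c
    by_cases hc : c = 0
    · subst hc
      rw [if_pos rfl]
      refine Finset.sum_eq_zero fun e _ => ?_
      by_cases h : (0:ZMod p) ^ 2 + e ^ 2 = 0 <;> simp [h]
    · rw [if_neg hc]
      have hjc : j * c ≠ 0 := mul_ne_zero hj0 hc
      have hcond : ∀ e : ZMod p, (c ^ 2 + e ^ 2 = 0) ↔ e ^ 2 = (j * c) ^ 2 := by
        intro e
        constructor
        · intro h; rw [mul_pow, hi2]; linear_combination h
        · intro h; rw [mul_pow, hi2] at h; linear_combination h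
      rw [sum_pair_ite hp hjc _ _ hcond, _root_.map_mul, show -(j*c) = -1 * j * c by ring,
        _root_.map_mul, _root_.map_mul, hχj, hχm1]
      have hsq : quadraticChar (ZMod p) c * quadraticChar (ZMod p) c = 1 := by
        rw [← sq]; exact quadraticChar_sq_one hc
      linear_combination -2 * hsq
  unfold Tsum
  rw [Fintype.sum_prod_type, Finset.sum_congr rfl fun c _ => hinner c]
  rw [← Finset.add_sum_erase Finset.univ _ (Finset.mem_univ (0 : ZMod p)), if_pos rfl, zero_add]
  rw [Finset.sum_congr rfl (fun c hc => if_neg (Finset.ne_of_mem_erase hc)), Finset.sum_const]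
  rw [Finset.card_erase_of_mem (Finset.mem_univ _), Finset.card_univ, ZMod.card]
  have h5 : 5 ≤ p := by omega
  rw [nsmul_eq_mul, Nat.cast_sub (by omega : 1 ≤ p)]
  push_cast
  ring

lemma sum_T : ∑ d : ZMod p, Tsum p d = 0 := by
  unfold Tsum
  rw [Finset.sum_comm]
  rw [Finset.sum_congr rfl fun ce _ =>
    Finset.sum_ite_eq Finset.univ (ce.1 ^ 2 + ce.2 ^ 2)
      (fun _ => quadraticChar (ZMod p) ce.1 * quadraticChar (ZMod p) ce.2)]
  simp only [Finset.mem_univ, if_true]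
  rw [Fintype.sum_prod_type, ← Finset.sum_mul_sum]
  rw [quadraticChar_sum_zero (by rw [ZMod.ringChar_zmod_n]; omega), zero_mul]

lemma T_pair {d : ZMod p} (hd : d ≠ 0) : Tsum p d + Tsum p (2 * d) = Tsum p 1 + Tsum p 2 := by
  by_cases hsq : IsSquare d
  · obtain ⟨u, hu⟩ := hsq
    have hu0 : u ≠ 0 := by rintro rfl; exact hd (by rw [hu]; ring)
    have h1 : d = u ^ 2 * 1 := by rw [hu]; ring
    have h2 : 2 * d = u ^ 2 * 2 := by rw [hu]; ring
    rw [h2, h1, T_scale hp hu0, T_scale hp hu0]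
  · have h2ns : ¬ IsSquare (2 : ZMod p) := by
      rw [ZMod.exists_sq_eq_two_iff (by omega)]; omega
    have h2ne := hp2ne hp
    have hhalf : IsSquare (d * 2⁻¹) := by
      by_contra hns
      have hd2 : d * 2⁻¹ ≠ 0 := mul_ne_zero hd (inv_ne_zero h2ne)
      have hχd : quadraticChar (ZMod p) d = -1 := quadraticChar_neg_one_iff_not_isSquare.mpr hsq
      have hχh : quadraticChar (ZMod p) (d * 2⁻¹) = -1 :=
        quadraticChar_neg_one_iff_not_isSquare.mpr hns
      have hχ2 : quadraticChar (ZMod p) 2 = -1 := quadraticChar_neg_one_iff_not_isSquare.mpr h2ns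
      have : quadraticChar (ZMod p) d = quadraticChar (ZMod p) (d * 2⁻¹) * quadraticChar (ZMod p) 2 := by
        rw [← _root_.map_mul, inv_mul_cancel_right₀ h2ne]
      rw [hχd, hχh, hχ2] at this
      norm_num at this
    obtain ⟨u, hu⟩ := hhalf
    have hdu : d = u ^ 2 * 2 := by
      have := hu
      field_simp at this
      rw [sq]; linear_combination this
    have hu0 : u ≠ 0 := by rintro rfl; exact hd (by rw [hdu]; ring)
    have h2d : 2 * d = (2 * u) ^ 2 * 1 := by rw [hdu]; ring
    rw [h2d, hdu, T_scale hp hu0, T_scale hp (mul_ne_zero h2ne hu0), add_comm]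

lemma T_one_add_T_two : Tsum p 1 + Tsum p 2 = 4 := by
  have h5 : 5 ≤ p := by omega
  have herase : ∑ d ∈ Finset.univ.erase (0 : ZMod p), Tsum p d = 2 * ((p : ℤ) - 1) := by
    have := Finset.add_sum_erase Finset.univ (Tsum p) (Finset.mem_univ (0 : ZMod p))
    rw [sum_T hp] at this
    rw [T_zero hp] at this
    linarith
  have h2bij : ∑ d ∈ Finset.univ.erase (0 : ZMod p), Tsum p (2 * d)
      = ∑ d ∈ Finset.univ.erase (0 : ZMod p), Tsum p d := by
    have huniv : ∑ d : ZMod p, Tsum p (2 * d) = ∑ d : ZMod p, Tsum p d :=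
      Fintype.sum_equiv (Equiv.mulLeft₀ (2 : ZMod p) (hp2ne hp)) _ _ (fun d => rfl)
    have e1 := Finset.add_sum_erase Finset.univ (fun d => Tsum p (2 * d)) (Finset.mem_univ (0 : ZMod p))
    have e2 := Finset.add_sum_erase Finset.univ (Tsum p) (Finset.mem_univ (0 : ZMod p))
    simp only [mul_zero] at e1
    rw [← e1, ← e2] at huniv
    exact add_left_cancel huniv
  have hconst : ∑ d ∈ Finset.univ.erase (0 : ZMod p), (Tsum p d + Tsum p (2 * d))
      = ((p : ℤ) - 1) * (Tsum p 1 + Tsum p 2) := by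
    rw [Finset.sum_congr rfl (fun d hd => T_pair hp (Finset.ne_of_mem_erase hd)),
      Finset.sum_const, Finset.card_erase_of_mem (Finset.mem_univ _), Finset.card_univ, ZMod.card,
      nsmul_eq_mul]
    push_cast [Nat.cast_sub (by omega : 1 ≤ p)]
    ring
  rw [Finset.sum_add_distrib, h2bij, herase] at hconst
  have hpne : ((p : ℤ) - 1) ≠ 0 := by
    have : (5 : ℤ) ≤ (p : ℤ) := by exact_mod_cast h5
    linarith
  apply mul_left_cancel₀ hpne
  rw [← hconst]; ring

lemma S_main (d : ZMod p) :
    Ssum p d + Ssum p (2 * d) = if d = 0 then 1 - (p : ℤ) else 1 := by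
  have h4 : (4 : ℤ) * (Ssum p d + Ssum p (2 * d)) = Tsum p d + Tsum p (2 * d) := by
    rw [mul_add, four_S hp, four_S hp]
  apply mul_left_cancel₀ (show (4:ℤ) ≠ 0 by norm_num)
  rw [h4]
  by_cases hd : d = 0
  · subst hd
    rw [if_pos rfl, mul_zero, T_zero hp]
    ring
  · rw [if_neg hd, T_pair hp hd, T_one_add_T_two hp]
    ring
end TS2

section Mat
variable {p : ℕ} [Fact p.Prime] (hp : p % 8 = 5)

lemma RY_eq (a b : ZMod p) : RY p a b = eta p (2 * (b - a)) := by
  simp [RY, RX, eta, Matrix.of_apply, sub_zero]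

include hp

lemma sum_eta_shift (b : ZMod p) : ∑ a : ZMod p, eta p (b - a) = 0 := by
  rw [Fintype.sum_equiv (Equiv.subLeft b) (fun a => eta p (b - a)) (eta p) (fun a => rfl)]
  exact sum_eta hp

lemma sum_eta_shift' (a : ZMod p) : ∑ b : ZMod p, eta p (b - a) = 0 := by
  rw [Fintype.sum_equiv (Equiv.subRight a) (fun b => eta p (b - a)) (eta p) (fun b => rfl)]
  exact sum_eta hp

lemma rx_row (a b : ZMod p) : ∑ c : ZMod p, RX p a c * RX p c b = Ssum p (b - a) := by
  unfold Ssum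
  refine Fintype.sum_equiv (Equiv.subRight a) _ _ fun c => ?_
  rw [RX_eq, RX_eq]
  show eta p (c - a) * eta p (b - c) = eta p (c - a) * eta p (b - a - (c - a))
  rw [show b - a - (c - a) = b - c by ring]

lemma ry_row (a b : ZMod p) : ∑ c : ZMod p, RY p a c * RY p c b = Ssum p (2 * (b - a)) := by
  unfold Ssum
  refine Fintype.sum_equiv ((Equiv.subRight a).trans (Equiv.mulLeft₀ 2 (hp2ne hp))) _ _ fun c => ?_
  rw [RY_eq, RY_eq]
  show eta p (2 * (c - a)) * eta p (2 * (b - c))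
      = eta p (2 * (c - a)) * eta p (2 * (b - a) - 2 * (c - a))
  rw [show 2 * (b - a) - 2 * (c - a) = 2 * (b - c) by ring]

theorem Xmat_sq_add_Ymat_sq' :
    Xmat p ^ 2 + Ymat p ^ 2 = (-(p : ℤ)) • (1 : Matrix (Option (ZMod p)) (Option (ZMod p)) ℤ) := by
  ext i j
  rw [Matrix.add_apply, pow_two, pow_two, Matrix.mul_apply, Matrix.mul_apply,
    Matrix.smul_apply, Matrix.one_apply]
  rw [Fintype.sum_option, Fintype.sum_option]
  match i, j with
  | none, none =>
    simp only [Xmat, Ymat, Matrix.of_apply, if_pos rfl]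
    rw [Finset.sum_congr rfl (fun a _ => show (1 : ℤ) * (-1) = -1 by ring),
      Finset.sum_congr rfl (fun a _ => show (0 : ℤ) * 0 = 0 by ring),
      Finset.sum_const, Finset.sum_const, Finset.card_univ, ZMod.card]
    push_cast [smul_eq_mul]
    ring
  | none, some b =>
    simp only [Xmat, Ymat, Matrix.of_apply]
    rw [if_neg (by simp), Finset.sum_congr rfl (fun a _ => show (1:ℤ) * RX p a b = RX p a b by ring),
      Finset.sum_congr rfl (fun a _ => show (0:ℤ) * RY p a b = 0 by ring),
      Finset.sum_congr rfl (fun a _ => (RX_eq a b : RX p a b = eta p (b - a))),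
      sum_eta_shift hp b]
    simp
  | some a, none =>
    simp only [Xmat, Ymat, Matrix.of_apply]
    rw [if_neg (by simp),
      Finset.sum_congr rfl (fun b _ => show RX p a b * (-1) = -(eta p (b - a)) by
        rw [RX_eq]; ring),
      Finset.sum_congr rfl (fun b _ => show RY p a b * 0 = 0 by ring),
      Finset.sum_neg_distrib, sum_eta_shift' hp a]
    simp
  | some a, some b =>
    simp only [Xmat, Ymat, Matrix.of_apply]
    rw [rx_row hp a b, ry_row hp a b]
    have hs := S_main hp (b - a)
    by_cases h : a = b
    · subst h
      rw [if_pos (sub_self a)] at hs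
      rw [if_pos rfl, smul_eq_mul, mul_one]
      linear_combination hs
    · rw [if_neg (sub_ne_zero.mpr fun hb => h hb.symm)] at hs
      rw [if_neg (show ¬ (some a : Option (ZMod p)) = some b from
          fun hc => h (Option.some.inj hc)), smul_eq_mul, mul_zero]
      linear_combination hs
end Mat


/-- for a prime `p ≡ 5 (mod 8)`, the matrices `X` and `Y` satisfy
`X² + Y² = -p I`. -/
theorem Xmat_sq_add_Ymat_sq (p : ℕ) [Fact p.Prime] (hp : p % 8 = 5) :
    Xmat p ^ 2 + Ymat p ^ 2 = (-(p : ℤ)) • (1 : Matrix (Option (ZMod p)) (Option (ZMod p)) ℤ) :=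
  Xmat_sq_add_Ymat_sq' hp
end

section
/- Let p be a prime with p ≡ 5 (mod 24) and let a ∈ {1,−1}. Then the ternary self-dual code NV^(a)(p) is generated by the rows of the Hadamard matrix H_{NV^(a)(p)}: the 𝔽₃-row space of H_{NV^(a)(p)} reduced modulo 3 is equal to NV^(a)(p). -/
open Matrix

lemma Hnv_row_inl (p : ℕ) [NeZero p] (a : ℤ) (o : Option (ZMod p)) :
    Hnv p a (Sum.inl o) = NVgen p a (Sum.inl o) + NVgen p a (Sum.inr o) := by
  funext j
  rcases j with j | j <;>
    simp [Hnv, NVgen, Bw, Matrix.fromBlocks, Matrix.add_apply, Matrix.sub_apply,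
      Matrix.smul_apply, Matrix.one_apply, Matrix.neg_apply, Matrix.transpose_apply,
      ← Matrix.diagonal_intCast, Matrix.diagonal_apply] <;>
    split_ifs <;> ring

lemma Hnv_row_inr (p : ℕ) [NeZero p] (a : ℤ) (o : Option (ZMod p)) :
    Hnv p a (Sum.inr o) = NVgen p a (Sum.inr o) - NVgen p a (Sum.inl o) := by
  funext j
  rcases j with j | j <;>
    simp [Hnv, NVgen, Bw, Matrix.fromBlocks, Matrix.add_apply, Matrix.sub_apply,
      Matrix.smul_apply, Matrix.one_apply, Matrix.neg_apply, Matrix.transpose_apply,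
      ← Matrix.diagonal_intCast, Matrix.diagonal_apply] <;>
    split_ifs <;> ring

/-- for a prime `p ≡ 5 (mod 24)` and `a ∈ {1, -1}`, the `𝔽₃`-row space of
`H_{NV^(a)(p)}` reduced modulo 3 equals the code `NV^(a)(p)`. -/
theorem Hnv_generates_NVcode (p : ℕ) [Fact p.Prime] (hp : p % 24 = 5)
    (a : ℤ) (ha : a = 1 ∨ a = -1) :
    Submodule.span (ZMod 3)
        (Set.range fun i => ((Hnv p a).map (Int.cast : ℤ → ZMod 3)) i) = NVcode p a := by
  apply le_antisymm
  · rw [Submodule.span_le]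
    rintro _ ⟨i, rfl⟩
    dsimp only
    rcases i with o | o
    · have h : ((Hnv p a).map (Int.cast : ℤ → ZMod 3)) (Sum.inl o)
          = ((NVgen p a).map (Int.cast : ℤ → ZMod 3)) (Sum.inl o)
            + ((NVgen p a).map (Int.cast : ℤ → ZMod 3)) (Sum.inr o) := by
        funext j
        have e := congrFun (Hnv_row_inl p a o) j
        simp only [Matrix.map_apply, Pi.add_apply, e]
        push_cast
        ring
      rw [h]
      exact Submodule.add_mem _ (Submodule.subset_span ⟨Sum.inl o, rfl⟩)
        (Submodule.subset_span ⟨Sum.inr o, rfl⟩)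
    · have h : ((Hnv p a).map (Int.cast : ℤ → ZMod 3)) (Sum.inr o)
          = ((NVgen p a).map (Int.cast : ℤ → ZMod 3)) (Sum.inr o)
            - ((NVgen p a).map (Int.cast : ℤ → ZMod 3)) (Sum.inl o) := by
        funext j
        have e := congrFun (Hnv_row_inr p a o) j
        simp only [Matrix.map_apply, Pi.sub_apply, e]
        push_cast
        ring
      rw [h]
      exact Submodule.sub_mem _ (Submodule.subset_span ⟨Sum.inr o, rfl⟩)
        (Submodule.subset_span ⟨Sum.inl o, rfl⟩)
  · rw [NVcode, Submodule.span_le]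
    rintro _ ⟨i, rfl⟩
    dsimp only
    rcases i with o | o
    · have h : ((NVgen p a).map (Int.cast : ℤ → ZMod 3)) (Sum.inl o)
          = ((Hnv p a).map (Int.cast : ℤ → ZMod 3)) (Sum.inr o)
            - ((Hnv p a).map (Int.cast : ℤ → ZMod 3)) (Sum.inl o) := by
        funext j
        have e1 := congrFun (Hnv_row_inl p a o) j
        have e2 := congrFun (Hnv_row_inr p a o) j
        simp only [Matrix.map_apply, Pi.sub_apply, Pi.add_apply] at *
        rw [e1, e2]
        push_cast
        have h3 : (3 : ZMod 3) = 0 := rfl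
        linear_combination ((NVgen p a (Sum.inl o) j : ZMod 3)) * h3
      rw [h]
      exact Submodule.sub_mem _ (Submodule.subset_span ⟨Sum.inr o, rfl⟩)
        (Submodule.subset_span ⟨Sum.inl o, rfl⟩)
    · have h : ((NVgen p a).map (Int.cast : ℤ → ZMod 3)) (Sum.inr o)
          = -(((Hnv p a).map (Int.cast : ℤ → ZMod 3)) (Sum.inl o)
            + ((Hnv p a).map (Int.cast : ℤ → ZMod 3)) (Sum.inr o)) := by
        funext j
        have e1 := congrFun (Hnv_row_inl p a o) j
        have e2 := congrFun (Hnv_row_inr p a o) j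
        simp only [Matrix.map_apply, Pi.neg_apply, Pi.sub_apply, Pi.add_apply] at *
        rw [e1, e2]
        push_cast
        have h3 : (3 : ZMod 3) = 0 := rfl
        linear_combination ((NVgen p a (Sum.inr o) j : ZMod 3)) * h3
      rw [h]
      exact Submodule.neg_mem _ (Submodule.add_mem _
        (Submodule.subset_span ⟨Sum.inl o, rfl⟩) (Submodule.subset_span ⟨Sum.inr o, rfl⟩))
end
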